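/- Let A be the Artin group on two generators a, b with relation aba⋯ = bab⋯ (each side an alternating word of length m), where 2 < m < ∞, and let δ = aba⋯ be the alternating word of length m in a and b (the Garside element). Then the centre of A is infinite cyclic; it is generated by δ if m is even, and by δ² if m is odd. -/

import Mathlib

/-- The alternating word `sts⋯` of length `k` in the free group on `S`. -/
def braidWord {S : Type*} (k : ℕ) (s t : S) : FreeGroup S :=
  ((List.range k).map fun i => FreeGroup.of (if i % 2 = 0 then s else t)).prod

/-- The braid relations of the Artin group with Coxeter-type matrix `M`
(`M s t = ⊤` means no relation). -/
def artinRels {S : Type*} (M : S → S → ℕ∞) : Set (FreeGroup S) :=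
  { r | ∃ s t : S, s ≠ t ∧ ∃ k : ℕ, M s t = (k : ℕ∞) ∧
      r = braidWord k s t * (braidWord k t s)⁻¹ }

/-- The Artin group associated to the matrix `M`. -/
abbrev ArtinGroup {S : Type*} (M : S → S → ℕ∞) : Type _ := PresentedGroup (artinRels M)

/-- The standard parabolic subgroup `A_X` generated by the images of elements of `X ⊆ S`. -/
def StandardParabolic {S : Type*} (M : S → S → ℕ∞) (X : Set S) : Subgroup (ArtinGroup M) :=
  Subgroup.closure ((fun s => (PresentedGroup.of s : ArtinGroup M)) '' X)

/-- The conjugate `g H g⁻¹` of a subgroup. -/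
def conjSubgroup {G : Type*} [Group G] (g : G) (H : Subgroup G) : Subgroup G :=
  H.map (MulAut.conj g).toMonoidHom

/-- A parabolic subgroup: a conjugate of a standard parabolic subgroup. -/
def IsParabolic {S : Type*} (M : S → S → ℕ∞) (P : Subgroup (ArtinGroup M)) : Prop :=
  ∃ (g : ArtinGroup M) (X : Set S), P = conjSubgroup g (StandardParabolic M X)

/-- The dihedral Artin group `⟨a, b | aba⋯ = bab⋯⟩` with coefficient `m`, realised as
the Artin group on the two-element set `Bool` (with `a` the image of `true` and
`b` the image of `false`). -/
abbrev DihedralArtin (m : ℕ) : Type :=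
  ArtinGroup (fun s t : Bool => if s = t then 1 else (m : ℕ∞))

/-- The generator `a` of the dihedral Artin group. -/
def dihedralA (m : ℕ) : DihedralArtin m := PresentedGroup.of true

/-- The generator `b` of the dihedral Artin group. -/
def dihedralB (m : ℕ) : DihedralArtin m := PresentedGroup.of false

/-- The Garside element `δ = aba⋯` (alternating word of length `m` starting with `a`)
of the dihedral Artin group with coefficient `m`. -/
def garsideElt (m : ℕ) : DihedralArtin m :=
  ((List.range m).map fun i => if i % 2 = 0 then dihedralA m else dihedralB m).prod


section Alt
variable {G : Type*} [Monoid G] (a b : G)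

def altWord (k : ℕ) : G := ((List.range k).map fun i => if i % 2 = 0 then a else b).prod

@[simp] lemma altWord_zero : altWord a b 0 = 1 := rfl

lemma altWord_succ (k : ℕ) : altWord a b (k+1) = a * altWord b a k := by
  unfold altWord
  rw [List.range_succ_eq_map, List.map_cons, List.prod_cons, List.map_map]
  refine congrArg (a * ·) (congrArg List.prod (List.map_congr_left fun i _ => ?_))
  simp only [Function.comp_apply, Nat.succ_mod_two_eq_zero_iff]
  rcases Nat.even_or_odd i with h | h
  · have hi := Nat.even_iff.mp h
    simp [hi, show ¬ (i % 2 = 1) by omega]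
  · have hi := Nat.odd_iff.mp h
    simp [hi, show ¬ (i % 2 = 0) by omega]

lemma mul_pow_shift (k : ℕ) : a * (b*a)^k = (a*b)^k * a := by
  induction k with
  | zero => simp
  | succ n ih => rw [pow_succ, ← mul_assoc, ih, pow_succ]; simp [mul_assoc]

lemma altWord_even (k : ℕ) : altWord a b (2*k) = (a*b)^k := by
  induction k with
  | zero => simp
  | succ n ih =>
      have h2 : 2 * (n+1) = (2*n+1)+1 := by ring
      rw [h2, altWord_succ, altWord_succ, ih, ← mul_assoc, ← pow_succ']

lemma altWord_odd (k : ℕ) : altWord a b (2*k+1) = (a*b)^k * a := by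
  rw [altWord_succ, altWord_even, mul_pow_shift]

lemma altWord_same (k : ℕ) : altWord a a k = a ^ k := by
  induction k with
  | zero => simp
  | succ n ih => rw [altWord_succ, ih, pow_succ']

lemma map_altWord {H : Type*} [Monoid H] (f : G →* H) (k : ℕ) :
    f (altWord a b k) = altWord (f a) (f b) k := by
  unfold altWord
  rw [← List.prod_hom _ f, List.map_map]
  refine congrArg List.prod (List.map_congr_left fun i _ => ?_)
  simp [apply_ite f]

end Alt

section DihedralAux

lemma braidWord_eq_altWord {S : Type*} (k : ℕ) (s t : S) :
    braidWord k s t = altWord (FreeGroup.of s) (FreeGroup.of t) k :=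
  congrArg List.prod (List.map_congr_left fun i _ => (apply_ite FreeGroup.of _ s t))

variable (m : ℕ)

abbrev dihedralM (m : ℕ) : Bool → Bool → ℕ∞ := fun s t : Bool => if s = t then 1 else (m : ℕ∞)

lemma garsideElt_eq_altWord : garsideElt m = altWord (dihedralA m) (dihedralB m) m := rfl

lemma dihedral_mk_of (s : Bool) :
    PresentedGroup.mk (artinRels (dihedralM m)) (FreeGroup.of s) = PresentedGroup.of s := rfl

lemma dihedral_relation :
    altWord (dihedralA m) (dihedralB m) m = altWord (dihedralB m) (dihedralA m) m := by
  have hmem : braidWord m true false * (braidWord m false true)⁻¹ ∈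
      artinRels (dihedralM m) :=
    ⟨true, false, by simp, m, by simp, rfl⟩
  have h1 : PresentedGroup.mk (artinRels (dihedralM m))
      (braidWord m true false * (braidWord m false true)⁻¹) = 1 := by
    rw [PresentedGroup.mk_eq_one_iff]
    exact Subgroup.subset_normalClosure hmem
  rw [map_mul, map_inv, mul_inv_eq_one, braidWord_eq_altWord, braidWord_eq_altWord,
    map_altWord, map_altWord, dihedral_mk_of, dihedral_mk_of] at h1
  exact h1

end DihedralAux


/-- The candidate generator of the centre: `δ` for even `m`, `δ²` for odd `m`. -/
def zElt (m : ℕ) : DihedralArtin m := if Even m then garsideElt m else garsideElt m ^ 2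

section Central

variable (m : ℕ)

local notation "aa" => dihedralA m
local notation "bb" => dihedralB m

lemma garside_even {k : ℕ} (hk : m = 2*k) :
    garsideElt m = (aa*bb)^k ∧ garsideElt m = (bb*aa)^k := by
  constructor
  · rw [garsideElt_eq_altWord, hk, altWord_even]
  · rw [garsideElt_eq_altWord, dihedral_relation, hk, altWord_even]

lemma garside_odd {k : ℕ} (hk : m = 2*k+1) :
    garsideElt m = (aa*bb)^k * aa ∧ garsideElt m = (bb*aa)^k * bb := by
  constructor
  · rw [garsideElt_eq_altWord, hk, altWord_odd]
  · rw [garsideElt_eq_altWord, dihedral_relation, hk, altWord_odd]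

lemma garside_sq_odd {k : ℕ} (hk : m = 2*k+1) :
    garsideElt m ^ 2 = (aa*bb)^m ∧ garsideElt m ^ 2 = (bb*aa)^m := by
  obtain ⟨h1, h2⟩ := garside_odd m hk
  constructor
  · calc garsideElt m ^ 2 = ((aa*bb)^k * aa) * ((bb*aa)^k * bb) := by
          rw [sq]; nth_rewrite 2 [h2]; rw [h1]
    _ = (aa*bb)^k * (aa * (bb*aa)^k) * bb := by simp [mul_assoc]
    _ = (aa*bb)^k * ((aa*bb)^k * aa) * bb := by rw [mul_pow_shift]
    _ = ((aa*bb)^k * (aa*bb)^k) * (aa*bb) := by simp [mul_assoc]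
    _ = (aa*bb)^m := by rw [← pow_add, ← pow_succ]; congr 1; omega
  · calc garsideElt m ^ 2 = ((bb*aa)^k * bb) * ((aa*bb)^k * aa) := by
          rw [sq]; nth_rewrite 2 [h1]; rw [h2]
    _ = (bb*aa)^k * (bb * (aa*bb)^k) * aa := by simp [mul_assoc]
    _ = (bb*aa)^k * ((bb*aa)^k * bb) * aa := by rw [mul_pow_shift]
    _ = ((bb*aa)^k * (bb*aa)^k) * (bb*aa) := by simp [mul_assoc]
    _ = (bb*aa)^m := by rw [← pow_add, ← pow_succ]; congr 1; omega

lemma zElt_pow_ab : ∃ N : ℕ, (m ≠ 0 → N ≠ 0) ∧ zElt m = (aa*bb)^N ∧ zElt m = (bb*aa)^N := by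
  by_cases hE : Even m
  · obtain ⟨k, hk⟩ := id hE
    have hk' : m = 2 * k := by omega
    obtain ⟨h1, h2⟩ := garside_even m hk'
    exact ⟨k, by omega, by rw [zElt, if_pos ⟨k, hk⟩, h1], by rw [zElt, if_pos ⟨k, hk⟩, h2]⟩
  · obtain ⟨k, hk⟩ := Nat.odd_iff.mpr (Nat.not_even_iff.mp hE)
    obtain ⟨h1, h2⟩ := garside_sq_odd m hk
    exact ⟨m, by omega, by rw [zElt, if_neg hE, h1], by rw [zElt, if_neg hE, h2]⟩

lemma z_commutes : zElt m * aa = aa * zElt m ∧ zElt m * bb = bb * zElt m := by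
  obtain ⟨N, -, h1, h2⟩ := zElt_pow_ab m
  constructor
  · conv_lhs => rw [h1]
    conv_rhs => rw [h2]
    exact (mul_pow_shift aa bb N).symm
  · conv_lhs => rw [h2]
    conv_rhs => rw [h1]
    exact (mul_pow_shift bb aa N).symm

lemma z_mem_center : zElt m ∈ Subgroup.center (DihedralArtin m) := by
  obtain ⟨hA, hB⟩ := z_commutes m
  rw [Subgroup.mem_center_iff]
  intro g
  have hsub : Set.range (PresentedGroup.of : Bool → DihedralArtin m) ⊆
      ↑(Subgroup.centralizer {zElt m}) := by
    rintro x ⟨s, rfl⟩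
    rw [SetLike.mem_coe, Subgroup.mem_centralizer_iff]
    rintro h hh
    rw [Set.mem_singleton_iff] at hh; subst hh
    cases s
    · exact hB
    · exact hA
  have hg : g ∈ Subgroup.centralizer {zElt m} :=
    (Subgroup.closure_le _).2 hsub
      (by rw [PresentedGroup.closure_range_of]; exact Subgroup.mem_top g)
  exact (Subgroup.mem_centralizer_iff.mp hg (zElt m) rfl).symm

end Central



section Length

variable (m : ℕ)

lemma length_rel : ∀ r ∈ artinRels (dihedralM m),
    FreeGroup.lift (fun _ : Bool => Multiplicative.ofAdd (1:ℤ)) r = 1 := by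
  rintro r ⟨s, t, hst, k, hk, rfl⟩
  rw [map_mul, map_inv, braidWord_eq_altWord, braidWord_eq_altWord, map_altWord, map_altWord]
  simp [altWord_same]

lemma zElt_zpow_eq_one_iff (hm : 0 < m) (n : ℤ) (hn : zElt m ^ n = 1) : n = 0 := by
  obtain ⟨N, hN, h1, -⟩ := zElt_pow_ab m
  set f : DihedralArtin m →* Multiplicative ℤ := PresentedGroup.toGroup (length_rel m) with hf
  have hfa : f (dihedralA m) = Multiplicative.ofAdd (1:ℤ) := PresentedGroup.toGroup.of _
  have hfb : f (dihedralB m) = Multiplicative.ofAdd (1:ℤ) := PresentedGroup.toGroup.of _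
  have hfz : (Multiplicative.toAdd (f (zElt m))) = 2 * (N:ℤ) := by
    rw [h1, map_pow, map_mul, hfa, hfb]
    simp [← ofAdd_add]
    ring
  have h2 := congrArg (fun x => Multiplicative.toAdd (f x)) hn
  simp only [map_zpow, map_one, toAdd_zpow, toAdd_one, hfz] at h2
  have : (N:ℤ) ≠ 0 := Int.natCast_ne_zero.mpr (hN hm.ne')
  have h3 : n * (2 * (N:ℤ)) = 0 := by rw [← smul_eq_mul]; exact h2
  rcases mul_eq_zero.mp h3 with h | h
  · exact h
  · omega

end Length


open Monoid CoprodI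

section FPCenter

variable {G : Bool → Type*} [∀ i, Group (G i)] [∀ i, DecidableEq (G i)]

private def mySnoc (w : Word G) (t : Bool) (u : G t) (hu : u ≠ 1)
    (hlast : ∀ y ∈ w.toList.getLast?, Sigma.fst y ≠ t) : Word G where
  toList := w.toList ++ [⟨t, u⟩]
  ne_one := by
    intro l hl
    rcases List.mem_append.mp hl with h | h
    · exact w.ne_one l h
    · rw [List.mem_singleton] at h
      subst h
      exact hu
  chain_ne := by
    rw [List.isChain_append]
    refine ⟨w.chain_ne, List.isChain_singleton _, ?_⟩
    intro a ha c hc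
    rw [List.head?_cons, Option.mem_some_iff] at hc
    subst hc
    exact hlast a ha

private lemma prod_mySnoc (w : Word G) (t : Bool) (u : G t) (hu : u ≠ 1)
    (hlast : ∀ y ∈ w.toList.getLast?, Sigma.fst y ≠ t) :
    (mySnoc w t u hu hlast).prod = w.prod * of u := by
  simp [mySnoc, Word.prod]

private def myTail (w : Word G) : Word G where
  toList := w.toList.tail
  ne_one l hl := w.ne_one l (List.mem_of_mem_tail hl)
  chain_ne := w.chain_ne.tail

private lemma prod_myTail (w : Word G) (x : Σ i, G i) (rest : List (Σ i, G i))
    (hl : w.toList = x :: rest) : w.prod = of x.2 * (myTail w).prod := by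
  simp [Word.prod, myTail, hl]

private lemma word_prod_injective : Function.Injective (Word.prod (M := G)) := by
  intro w1 w2 h12
  calc w1 = Word.equiv (Word.equiv.symm w1) := (Word.equiv.apply_symm_apply w1).symm
  _ = Word.equiv w1.prod := rfl
  _ = Word.equiv w2.prod := by rw [h12]
  _ = w2 := Word.equiv.apply_symm_apply w2

lemma coprodI_center_eq_one [∀ i, Nontrivial (G i)]
    {g : CoprodI G} (hg : ∀ h, g * h = h * g) : g = 1 := by
  by_contra hne
  set w := Word.equiv g with hw
  have hprodw : w.prod = g := Word.equiv.symm_apply_apply g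
  cases hl : w.toList with
  | nil =>
      apply hne
      rw [← hprodw]
      have : w = Word.empty := Word.ext hl
      rw [this, Word.prod_empty]
  | cons x rest =>
  obtain ⟨y, hy⟩ : ∃ y, w.toList.getLast? = some y :=
    Option.isSome_iff_exists.mp (List.getLast?_isSome.mpr (by rw [hl]; simp))
  have hxne : x.2 ≠ 1 := w.ne_one x (by rw [hl]; exact List.mem_cons_self)
  by_cases hij : y.1 = x.1
  · -- first and last letters in the same factor : multiply by a letter from the other factor
    obtain ⟨u, hu⟩ := exists_ne (1 : G (!x.1))
    have hfst : w.fstIdx ≠ some (!x.1) := by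
      rw [Word.fstIdx, hl]
      simp
    have h2 : ∀ y' ∈ w.toList.getLast?, Sigma.fst y' ≠ (!x.1) := by
      intro y' hy'
      rw [hy, Option.mem_some_iff] at hy'
      subst hy'
      rw [hij]
      simp
    have hp : (Word.cons u w hfst hu).prod = (mySnoc w (!x.1) u hu h2).prod := by
      rw [Word.prod_cons, prod_mySnoc, hprodw, hg (of u)]
    have hlists := congrArg (fun v : Word G => v.toList.head?.map Sigma.fst)
      (word_prod_injective hp)
    simp only [Word.cons, mySnoc, hl, List.cons_append, List.head?_cons, Option.map_some] at hlists
    rw [Option.some_inj] at hlists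
    exact (Bool.not_ne_self x.1) hlists
  · -- first and last letters in different factors : cancel the first letter
    have hxinv : (x.2)⁻¹ ≠ 1 := inv_ne_one.mpr hxne
    have h2 : ∀ y' ∈ w.toList.getLast?, Sigma.fst y' ≠ x.1 := by
      intro y' hy'
      rw [hy, Option.mem_some_iff] at hy'
      subst hy'
      exact hij
    have hp1 : (myTail w).prod = g * of (x.2)⁻¹ := by
      have h3 : w.prod = of x.2 * (myTail w).prod := prod_myTail w x rest hl
      rw [hprodw] at h3
      rw [hg (of (x.2)⁻¹), h3, ← mul_assoc, ← map_mul]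
      simp
    have hp : (myTail w).prod = (mySnoc w x.1 (x.2)⁻¹ hxinv h2).prod := by
      rw [hp1, prod_mySnoc, hprodw]
    have hlen := congrArg (fun v : Word G => v.toList.length) (word_prod_injective hp)
    simp only [myTail, mySnoc, hl, List.length_append, List.length_tail, List.length_cons] at hlen
    omega

end FPCenter


section Helpers

variable {H : Type*} [Group H]

lemma pow_mod_eq {n : ℕ} {q : H} (hq : q ^ n = 1) (s : ℕ) : q ^ (s % n) = q ^ s := by
  conv_rhs => rw [← Nat.div_add_mod s n]
  rw [pow_add, pow_mul, hq, one_pow, one_mul]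

/-- The homomorphism `Multiplicative (ZMod n) →* H` sending the generator to `q`,
for `q` of order dividing `n`. -/
def zmodHom (n : ℕ) [NeZero n] (q : H) (hq : q ^ n = 1) : Multiplicative (ZMod n) →* H where
  toFun x := q ^ (Multiplicative.toAdd x).val
  map_one' := by simp
  map_mul' x y := by
    show q ^ ((Multiplicative.toAdd x + Multiplicative.toAdd y).val) = _
    rw [ZMod.val_add, pow_mod_eq hq, pow_add]

lemma zmodHom_gen {n : ℕ} [NeZero n] (hn : 1 < n) (q : H) (hq : q ^ n = 1) :
    zmodHom n q hq (Multiplicative.ofAdd 1) = q := by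
  haveI : Fact (1 < n) := ⟨hn⟩
  show q ^ (Multiplicative.toAdd (Multiplicative.ofAdd (1 : ZMod n))).val = q
  rw [toAdd_ofAdd, ZMod.val_one, pow_one]

lemma zmodHom_ext {n : ℕ} [NeZero n] {f₁ f₂ : Multiplicative (ZMod n) →* H}
    (h : f₁ (Multiplicative.ofAdd 1) = f₂ (Multiplicative.ofAdd 1)) : f₁ = f₂ := by
  refine MonoidHom.ext fun x => ?_
  have hx : x = (Multiplicative.ofAdd (1 : ZMod n)) ^ (Multiplicative.toAdd x).val := by
    rw [← ofAdd_nsmul, nsmul_eq_mul, mul_one, ZMod.natCast_zmod_val]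
    simp
  conv_lhs => rw [hx]
  conv_rhs => rw [hx]
  rw [map_pow, map_pow, h]

lemma conj_pow'' (a b : H) (n : ℕ) : (a⁻¹ * b * a) ^ n = a⁻¹ * b ^ n * a := by
  have h := conj_pow (i := n) (a := a⁻¹) (b := b)
  rwa [inv_inv] at h

/-- Glue lemma: if `A ⧸ ⟨z⟩` is a retract-isomorph of a group with the property that
central elements are trivial, then the centre of `A` is contained in `⟨z⟩`. -/
lemma center_le_zpowers_glue {A : Type*} [Group A] {z : A}
    [instN : (Subgroup.zpowers z).Normal]
    {Q : Type*} [Group Q] (hQ : ∀ q : Q, (∀ h, q * h = h * q) → q = 1)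
    (f' : A ⧸ Subgroup.zpowers z →* Q) (g : Q →* A ⧸ Subgroup.zpowers z)
    (hgf : ∀ c, g (f' c) = c) (hfg : ∀ q, f' (g q) = q)
    {c : A} (hc : c ∈ Subgroup.center A) :
    c ∈ Subgroup.zpowers z := by
  have hcen : ∀ d : A ⧸ Subgroup.zpowers z,
      (QuotientGroup.mk c : A ⧸ Subgroup.zpowers z) * d = d * QuotientGroup.mk c := by
    intro d
    obtain ⟨h, rfl⟩ := QuotientGroup.mk_surjective d
    rw [← QuotientGroup.mk_mul, ← QuotientGroup.mk_mul, (Subgroup.mem_center_iff.mp hc h).symm]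
  have hq1 : f' (QuotientGroup.mk c) = 1 := by
    refine hQ _ (fun q => ?_)
    conv_lhs => rw [← hfg q]
    conv_rhs => rw [← hfg q]
    rw [← map_mul, ← map_mul, hcen (g q)]
  have hfin : (QuotientGroup.mk c : A ⧸ Subgroup.zpowers z) = 1 := by
    rw [← hgf (QuotientGroup.mk c), hq1, map_one]
  exact (QuotientGroup.eq_one_iff c).mp hfin

end Helpers

instance zpowers_zElt_normal (m : ℕ) : (Subgroup.zpowers (zElt m)).Normal := by
  constructor
  intro x hx g
  obtain ⟨n, rfl⟩ := hx
  refine ⟨n, ?_⟩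
  have hcomm : Commute g (zElt m) := Subgroup.mem_center_iff.mp (z_mem_center m) g
  rw [(hcomm.zpow_right n).eq, mul_assoc, mul_inv_cancel, mul_one]


section EvenCase

open Monoid CoprodI

/-- Factor groups for the free-product quotient in the even case: `ℤ ∗ ℤ/k`. -/
def EvenFactor (k : ℕ) : Bool → Type := fun i => cond i (Multiplicative ℤ) (Multiplicative (ZMod k))

instance evenFactorGroup (k : ℕ) : ∀ i, Group (EvenFactor k i) := fun i => by
  cases i
  · exact inferInstanceAs (Group (Multiplicative (ZMod k)))
  · exact inferInstanceAs (Group (Multiplicative ℤ))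

instance evenFactorDecEq (k : ℕ) : ∀ i, DecidableEq (EvenFactor k i) := fun i => by
  cases i
  · exact inferInstanceAs (DecidableEq (Multiplicative (ZMod k)))
  · exact inferInstanceAs (DecidableEq (Multiplicative ℤ))

instance evenFactorNontrivial (k : ℕ) [Fact (1 < k)] : ∀ i, Nontrivial (EvenFactor k i) := by
  intro i
  cases i
  · exact inferInstanceAs (Nontrivial (Multiplicative (ZMod k)))
  · exact inferInstanceAs (Nontrivial (Multiplicative ℤ))

variable (k : ℕ)

/-- Image of the generator `a`. -/
def evGenA : CoprodI (EvenFactor k) := of (i := true) (Multiplicative.ofAdd (1 : ℤ))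

/-- Image of the generator `x = ab`. -/
def evGenX : CoprodI (EvenFactor k) := of (i := false) (Multiplicative.ofAdd (1 : ZMod k))

/-- Images of the two Artin generators. -/
def evMap : Bool → CoprodI (EvenFactor k) := fun s => cond s (evGenA k) ((evGenA k)⁻¹ * evGenX k)

lemma evGenX_pow : evGenX k ^ k = 1 := by
  have h : (Multiplicative.ofAdd (1 : ZMod k)) ^ k = 1 := by
    rw [← ofAdd_nsmul, nsmul_eq_mul, mul_one, ZMod.natCast_self, ofAdd_zero]
  rw [evGenX]
  erw [← map_pow]
  show (of (M := EvenFactor k) (i := false) ((Multiplicative.ofAdd (1 : ZMod k)) ^ k)) = 1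
  erw [h, map_one]

lemma even_alt (m : ℕ) (hk : m = 2*k) :
    altWord (evMap k true) (evMap k false) m = 1 ∧
      altWord (evMap k false) (evMap k true) m = 1 := by
  have h1 : evMap k true * evMap k false = evGenX k := by
    show evGenA k * ((evGenA k)⁻¹ * evGenX k) = evGenX k
    group
  have h2 : evMap k false * evMap k true = (evGenA k)⁻¹ * evGenX k * evGenA k := by
    show (evGenA k)⁻¹ * evGenX k * evGenA k = _
    rfl
  constructor
  · rw [hk, altWord_even, h1, evGenX_pow]
  · rw [hk, altWord_even, h2, conj_pow'', evGenX_pow, mul_one, inv_mul_cancel]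

lemma even_rel (m : ℕ) (hk : m = 2*k) : ∀ r ∈ artinRels (dihedralM m),
    FreeGroup.lift (evMap k) r = 1 := by
  rintro r ⟨s, t, hst, k', hk', rfl⟩
  have hkm : k' = m := by
    simp only [dihedralM, if_neg hst] at hk'
    exact_mod_cast hk'.symm
  rw [hkm, map_mul, map_inv, braidWord_eq_altWord, braidWord_eq_altWord, map_altWord, map_altWord,
    mul_inv_eq_one]
  simp only [FreeGroup.lift_apply_of]
  obtain ⟨hA, hB⟩ := even_alt k m hk
  cases s <;> cases t <;> simp_all

/-- The homomorphism from the dihedral Artin group in the even case. -/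
def evF (m : ℕ) (hk : m = 2*k) : DihedralArtin m →* CoprodI (EvenFactor k) :=
  PresentedGroup.toGroup (even_rel k m hk)

lemma evF_a (m : ℕ) (hk : m = 2*k) : evF k m hk (dihedralA m) = evGenA k :=
  PresentedGroup.toGroup.of _

lemma evF_b (m : ℕ) (hk : m = 2*k) : evF k m hk (dihedralB m) = (evGenA k)⁻¹ * evGenX k :=
  PresentedGroup.toGroup.of _

lemma evF_z (m : ℕ) (hm : Even m) (hk : m = 2*k) : evF k m hk (zElt m) = 1 := by
  rw [zElt, if_pos hm, garsideElt_eq_altWord, map_altWord, evF_a, evF_b]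
  exact (even_alt k m hk).1

lemma center_le_even (m : ℕ) (hm : Even m) (k : ℕ) (hk : m = 2*k) (hk2 : 2 ≤ k)
    {c : DihedralArtin m} (hc : c ∈ Subgroup.center (DihedralArtin m)) :
    c ∈ Subgroup.zpowers (zElt m) := by
  haveI : NeZero k := ⟨by omega⟩
  haveI : Fact (1 < k) := ⟨by omega⟩
  set Z := Subgroup.zpowers (zElt m)
  -- the descended homomorphism
  have hzmem : ∀ x ∈ Z, evF k m hk x = 1 := by
    rintro x ⟨n, rfl⟩
    rw [map_zpow, evF_z k m hm hk, one_zpow]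
  set f' : DihedralArtin m ⧸ Z →* CoprodI (EvenFactor k) := QuotientGroup.lift Z (evF k m hk) hzmem with hf'
  -- the inverse homomorphism
  have hqx : ((QuotientGroup.mk (dihedralA m * dihedralB m) : DihedralArtin m ⧸ Z)) ^ k = 1 := by
    rw [← QuotientGroup.mk_pow, QuotientGroup.eq_one_iff]
    refine Subgroup.mem_zpowers_iff.mpr ⟨1, ?_⟩
    rw [zpow_one, zElt, if_pos hm]
    exact (garside_even m hk).1
  set g : CoprodI (EvenFactor k) →* DihedralArtin m ⧸ Z :=
    CoprodI.lift (fun i => match i with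
      | true => zpowersHom _ (QuotientGroup.mk (dihedralA m))
      | false => zmodHom k _ hqx) with hg
  have hga : g (evGenA k) = QuotientGroup.mk (dihedralA m) := by
    rw [evGenA, hg]
    erw [CoprodI.lift_of]
    show zpowersHom _ (QuotientGroup.mk (dihedralA m)) (Multiplicative.ofAdd (1:ℤ))
      = QuotientGroup.mk (dihedralA m)
    rw [zpowersHom_apply, toAdd_ofAdd, zpow_one]
  have hgx : g (evGenX k) = QuotientGroup.mk (dihedralA m * dihedralB m) := by
    rw [evGenX, hg]
    erw [CoprodI.lift_of]
    show zmodHom k (QuotientGroup.mk (dihedralA m * dihedralB m)) hqx (Multiplicative.ofAdd 1)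
      = QuotientGroup.mk (dihedralA m * dihedralB m)
    exact zmodHom_gen (by omega) _ hqx
  have hf'a : f' (QuotientGroup.mk (dihedralA m)) = evGenA k := by
    rw [hf']
    erw [QuotientGroup.lift_mk']
    rw [evF_a]
  have hf'b : f' (QuotientGroup.mk (dihedralB m)) = (evGenA k)⁻¹ * evGenX k := by
    rw [hf']
    erw [QuotientGroup.lift_mk']
    rw [evF_b]
  -- composites
  have hgf : ∀ c', g (f' c') = c' := by
    have hcomp : (g.comp f').comp (QuotientGroup.mk' Z) = QuotientGroup.mk' Z := by
      apply PresentedGroup.ext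
      intro s
      cases s
      · show g (f' (QuotientGroup.mk (dihedralB m))) = QuotientGroup.mk (dihedralB m)
        rw [hf'b, map_mul, map_inv, hga, hgx, ← QuotientGroup.mk_inv, ← QuotientGroup.mk_mul]
        congr 1
        group
      · show g (f' (QuotientGroup.mk (dihedralA m))) = QuotientGroup.mk (dihedralA m)
        rw [hf'a, hga]
    intro c'
    obtain ⟨x, rfl⟩ := QuotientGroup.mk_surjective c'
    exact DFunLike.congr_fun hcomp x
  have hfg : ∀ q, f' (g q) = q := by
    have hcomp : f'.comp g = MonoidHom.id _ := by
      apply CoprodI.ext_hom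
      intro i
      cases i
      · apply zmodHom_ext
        show f' (g (evGenX k)) = evGenX k
        rw [hgx, hf']
        erw [QuotientGroup.lift_mk']
        rw [map_mul, evF_a, evF_b]
        group
      · apply MonoidHom.ext_mint
        show f' (g (evGenA k)) = evGenA k
        rw [hga, hf'a]
    intro q
    exact DFunLike.congr_fun hcomp q
  exact center_le_zpowers_glue (fun q hq => coprodI_center_eq_one hq) f' g hgf hfg hc

end EvenCase


section OddCase

open Monoid CoprodI

/-- Factor groups for the free-product quotient in the odd case: `ℤ/2 ∗ ℤ/m`. -/
def OddFactor (m : ℕ) : Bool → Type :=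
  fun i => cond i (Multiplicative (ZMod 2)) (Multiplicative (ZMod m))

instance oddFactorGroup (m : ℕ) : ∀ i, Group (OddFactor m i) := fun i => by
  cases i
  · exact inferInstanceAs (Group (Multiplicative (ZMod m)))
  · exact inferInstanceAs (Group (Multiplicative (ZMod 2)))

instance oddFactorDecEq (m : ℕ) : ∀ i, DecidableEq (OddFactor m i) := fun i => by
  cases i
  · exact inferInstanceAs (DecidableEq (Multiplicative (ZMod m)))
  · exact inferInstanceAs (DecidableEq (Multiplicative (ZMod 2)))

instance oddFactorNontrivial (m : ℕ) [Fact (1 < m)] : ∀ i, Nontrivial (OddFactor m i) := by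
  intro i
  cases i
  · exact inferInstanceAs (Nontrivial (Multiplicative (ZMod m)))
  · exact inferInstanceAs (Nontrivial (Multiplicative (ZMod 2)))

variable (m k : ℕ)

/-- Image of the Garside element `δ`. -/
def odGenU : CoprodI (OddFactor m) := of (i := true) (Multiplicative.ofAdd (1 : ZMod 2))

/-- Image of `x = ab`. -/
def odGenV : CoprodI (OddFactor m) := of (i := false) (Multiplicative.ofAdd (1 : ZMod m))

/-- Images of the two Artin generators. -/
def odMap : Bool → CoprodI (OddFactor m) :=
  fun s => cond s (((odGenV m)^k)⁻¹ * odGenU m) ((odGenU m)⁻¹ * (odGenV m)^(k+1))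

lemma odGenV_pow : odGenV m ^ m = 1 := by
  have h : (Multiplicative.ofAdd (1 : ZMod m)) ^ m = 1 := by
    rw [← ofAdd_nsmul, nsmul_eq_mul, mul_one, ZMod.natCast_self, ofAdd_zero]
  rw [odGenV]
  erw [← map_pow]
  show (of (M := OddFactor m) (i := false) ((Multiplicative.ofAdd (1 : ZMod m)) ^ m)) = 1
  erw [h, map_one]

lemma odGenU_sq : odGenU m ^ 2 = 1 := by
  have h : (Multiplicative.ofAdd (1 : ZMod 2)) ^ 2 = 1 := by
    rw [← ofAdd_nsmul, nsmul_eq_mul, mul_one, ZMod.natCast_self, ofAdd_zero]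
  rw [odGenU]
  erw [← map_pow]
  show (of (M := OddFactor m) (i := true) ((Multiplicative.ofAdd (1 : ZMod 2)) ^ 2)) = 1
  erw [h, map_one]

lemma odGenU_inv : (odGenU m)⁻¹ = odGenU m := by
  have h := odGenU_sq m
  rw [sq] at h
  exact inv_eq_of_mul_eq_one_right h |>.symm ▸ (eq_inv_of_mul_eq_one_left h).symm

lemma odd_alt (hk : m = 2*k+1) :
    altWord (odMap m k true) (odMap m k false) m = odGenU m ∧
      altWord (odMap m k false) (odMap m k true) m = odGenU m := by
  have h1 : odMap m k true * odMap m k false = odGenV m := by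
    show ((odGenV m)^k)⁻¹ * odGenU m * ((odGenU m)⁻¹ * (odGenV m)^(k+1)) = odGenV m
    have : ((odGenV m)^k)⁻¹ * odGenU m * ((odGenU m)⁻¹ * (odGenV m)^(k+1))
        = ((odGenV m)^k)⁻¹ * ((odGenV m)^k * odGenV m) := by
      rw [← pow_succ]
      group
    rw [this, inv_mul_cancel_left]
  have h2 : odMap m k false * odMap m k true
      = (odGenU m)⁻¹ * odGenV m * odGenU m := by
    show (odGenU m)⁻¹ * (odGenV m)^(k+1) * (((odGenV m)^k)⁻¹ * odGenU m) = _
    rw [pow_succ']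
    group
  have hv : (odGenV m)^k * (odGenV m)^(k+1) = 1 := by
    rw [← pow_add, show k+(k+1) = m by omega, odGenV_pow]
  have haltA : altWord (odMap m k true) (odMap m k false) m
      = (odMap m k true * odMap m k false) ^ k * odMap m k true :=
    (congrArg (altWord (odMap m k true) (odMap m k false)) hk).trans
      (altWord_odd (odMap m k true) (odMap m k false) k)
  have haltB : altWord (odMap m k false) (odMap m k true) m
      = (odMap m k false * odMap m k true) ^ k * odMap m k false :=
    (congrArg (altWord (odMap m k false) (odMap m k true)) hk).trans
      (altWord_odd (odMap m k false) (odMap m k true) k)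
  constructor
  · rw [haltA, h1]
    show (odGenV m)^k * (((odGenV m)^k)⁻¹ * odGenU m) = odGenU m
    rw [mul_inv_cancel_left]
  · rw [haltB, h2, conj_pow'']
    show (odGenU m)⁻¹ * (odGenV m)^k * odGenU m * ((odGenU m)⁻¹ * (odGenV m)^(k+1)) = odGenU m
    have hstep : (odGenU m)⁻¹ * (odGenV m)^k * odGenU m * ((odGenU m)⁻¹ * (odGenV m)^(k+1))
        = (odGenU m)⁻¹ * ((odGenV m)^k * (odGenV m)^(k+1)) := by group
    rw [hstep, hv, mul_one, odGenU_inv]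

lemma odd_rel (hk : m = 2*k+1) : ∀ r ∈ artinRels (dihedralM m),
    FreeGroup.lift (odMap m k) r = 1 := by
  rintro r ⟨s, t, hst, k', hk', rfl⟩
  have hkm : k' = m := by
    simp only [dihedralM, if_neg hst] at hk'
    exact_mod_cast hk'.symm
  rw [hkm, map_mul, map_inv, braidWord_eq_altWord, braidWord_eq_altWord, map_altWord, map_altWord,
    mul_inv_eq_one]
  simp only [FreeGroup.lift_apply_of]
  obtain ⟨hA, hB⟩ := odd_alt m k hk
  cases s <;> cases t <;> simp_all

/-- The homomorphism from the dihedral Artin group in the odd case. -/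
def odF (hk : m = 2*k+1) : DihedralArtin m →* CoprodI (OddFactor m) :=
  PresentedGroup.toGroup (odd_rel m k hk)

lemma odF_a (hk : m = 2*k+1) : odF m k hk (dihedralA m) = ((odGenV m)^k)⁻¹ * odGenU m :=
  PresentedGroup.toGroup.of _

lemma odF_b (hk : m = 2*k+1) : odF m k hk (dihedralB m) = (odGenU m)⁻¹ * (odGenV m)^(k+1) :=
  PresentedGroup.toGroup.of _

lemma odF_delta (hk : m = 2*k+1) : odF m k hk (garsideElt m) = odGenU m := by
  rw [garsideElt_eq_altWord, map_altWord, odF_a, odF_b]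
  exact (odd_alt m k hk).1

lemma odF_z (hm : ¬ Even m) (hk : m = 2*k+1) : odF m k hk (zElt m) = 1 := by
  rw [zElt, if_neg hm, map_pow, odF_delta m k hk, odGenU_sq]

lemma center_le_odd (hm : ¬ Even m) (hk : m = 2*k+1) (hk1 : 1 ≤ k)
    {c : DihedralArtin m} (hc : c ∈ Subgroup.center (DihedralArtin m)) :
    c ∈ Subgroup.zpowers (zElt m) := by
  haveI : NeZero m := ⟨by omega⟩
  haveI : Fact (1 < m) := ⟨by omega⟩
  set Z := Subgroup.zpowers (zElt m)
  have hzmem : ∀ x ∈ Z, odF m k hk x = 1 := by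
    rintro x ⟨n, rfl⟩
    rw [map_zpow, odF_z m k hm hk, one_zpow]
  set f' : DihedralArtin m ⧸ Z →* CoprodI (OddFactor m) :=
    QuotientGroup.lift Z (odF m k hk) hzmem with hf'
  have hqu : ((QuotientGroup.mk (garsideElt m) : DihedralArtin m ⧸ Z)) ^ 2 = 1 := by
    rw [← QuotientGroup.mk_pow, QuotientGroup.eq_one_iff]
    refine Subgroup.mem_zpowers_iff.mpr ⟨1, ?_⟩
    rw [zpow_one, zElt, if_neg hm]
  have hqv : ((QuotientGroup.mk (dihedralA m * dihedralB m) : DihedralArtin m ⧸ Z)) ^ m = 1 := by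
    rw [← QuotientGroup.mk_pow, QuotientGroup.eq_one_iff]
    refine Subgroup.mem_zpowers_iff.mpr ⟨1, ?_⟩
    rw [zpow_one, zElt, if_neg hm]
    exact (garside_sq_odd m hk).1
  set g : CoprodI (OddFactor m) →* DihedralArtin m ⧸ Z :=
    CoprodI.lift (fun i => match i with
      | true => zmodHom 2 _ hqu
      | false => zmodHom m _ hqv) with hg
  have hgu : g (odGenU m) = QuotientGroup.mk (garsideElt m) := by
    rw [odGenU, hg]
    erw [CoprodI.lift_of]
    show zmodHom 2 (QuotientGroup.mk (garsideElt m)) hqu (Multiplicative.ofAdd 1)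
      = QuotientGroup.mk (garsideElt m)
    exact zmodHom_gen (by omega) _ hqu
  have hgv : g (odGenV m) = QuotientGroup.mk (dihedralA m * dihedralB m) := by
    rw [odGenV, hg]
    erw [CoprodI.lift_of]
    show zmodHom m (QuotientGroup.mk (dihedralA m * dihedralB m)) hqv (Multiplicative.ofAdd 1)
      = QuotientGroup.mk (dihedralA m * dihedralB m)
    exact zmodHom_gen (by omega) _ hqv
  have hf'a : f' (QuotientGroup.mk (dihedralA m)) = ((odGenV m)^k)⁻¹ * odGenU m := by
    rw [hf']
    erw [QuotientGroup.lift_mk']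
    rw [odF_a]
  have hf'b : f' (QuotientGroup.mk (dihedralB m)) = (odGenU m)⁻¹ * (odGenV m)^(k+1) := by
    rw [hf']
    erw [QuotientGroup.lift_mk']
    rw [odF_b]
  have hgf : ∀ c', g (f' c') = c' := by
    have hcomp : (g.comp f').comp (QuotientGroup.mk' Z) = QuotientGroup.mk' Z := by
      apply PresentedGroup.ext
      intro s
      cases s
      · show g (f' (QuotientGroup.mk (dihedralB m))) = QuotientGroup.mk (dihedralB m)
        rw [hf'b, map_mul, map_inv, map_pow, hgu, hgv, ← QuotientGroup.mk_inv,
          ← QuotientGroup.mk_pow, ← QuotientGroup.mk_mul]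
        congr 1
        rw [(garside_odd m hk).1]
        group
      · show g (f' (QuotientGroup.mk (dihedralA m))) = QuotientGroup.mk (dihedralA m)
        rw [hf'a, map_mul, map_inv, map_pow, hgu, hgv, ← QuotientGroup.mk_pow,
          ← QuotientGroup.mk_inv, ← QuotientGroup.mk_mul]
        congr 1
        rw [(garside_odd m hk).1]
        group
    intro c'
    obtain ⟨x, rfl⟩ := QuotientGroup.mk_surjective c'
    exact DFunLike.congr_fun hcomp x
  have hfg : ∀ q, f' (g q) = q := by
    have hcomp : f'.comp g = MonoidHom.id _ := by
      apply CoprodI.ext_hom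
      intro i
      cases i
      · apply zmodHom_ext
        show f' (g (odGenV m)) = odGenV m
        rw [hgv, hf']
        erw [QuotientGroup.lift_mk']
        rw [map_mul, odF_a, odF_b]
        have h1 : ((odGenV m)^k)⁻¹ * odGenU m * ((odGenU m)⁻¹ * (odGenV m)^(k+1))
            = ((odGenV m)^k)⁻¹ * ((odGenV m)^k * odGenV m) := by
          rw [← pow_succ]
          group
        rw [h1, inv_mul_cancel_left]
      · refine zmodHom_ext (n := 2) ?_
        show f' (g (odGenU m)) = odGenU m
        rw [hgu, hf']
        erw [QuotientGroup.lift_mk']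
        rw [odF_delta]
    intro q
    exact DFunLike.congr_fun hcomp q
  exact center_le_zpowers_glue (fun q hq => coprodI_center_eq_one hq) f' g hgf hfg hc

end OddCase

/-- The centre of the dihedral Artin group with coefficient `2 < m < ∞` is infinite
cyclic, generated by the Garside element `δ` if `m` is even and by `δ²` if `m` is odd. -/
theorem centre_dihedral_artin (m : ℕ) (hm : 2 < m) :
    Subgroup.center (DihedralArtin m) =
        Subgroup.zpowers (if Even m then garsideElt m else (garsideElt m) ^ 2) ∧
      ∀ n : ℤ, (if Even m then garsideElt m else (garsideElt m) ^ 2) ^ n = 1 → n = 0 := by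
  have hz : (if Even m then garsideElt m else garsideElt m ^ 2) = zElt m := rfl
  rw [hz]
  constructor
  · apply le_antisymm
    · intro c hc
      by_cases hE : Even m
      · obtain ⟨k, hk⟩ := id hE
        exact center_le_even m hE k (by omega) (by omega) hc
      · obtain ⟨k, hk⟩ := Nat.odd_iff.mpr (Nat.not_even_iff.mp hE)
        exact center_le_odd m k hE hk (by omega) hc
    · exact Subgroup.zpowers_le.mpr (z_mem_center m)
  · intro n hn
    exact zElt_zpow_eq_one_iff m (by omega) n hn
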